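/- Drift bound between synchronizations for asynchronous local updates: Assume ητ ≤ 1/2. For any given δ ∈ (0,1), with probability at least 1-δ, simultaneously for all agents k ∈ {1,…,K} and all 0 ≤ u < T, ‖Q_u^k − Q_{ι(u)}^k‖_∞ ≤ 2ητ ‖Δ_{ι(u)}^k‖_∞ + (8γη√(τ-1)/(1-γ)) · sqrt(log(2|S||A|TK/δ)), where Δ_v^k = Q* − Q_v^k and ι(u) = τ⌊u/τ⌋ is the most recent synchronization step until u. -/

import Mathlib

open MeasureTheory ProbabilityTheory


noncomputable def vmax {A : Type*} [Fintype A] (f : A → ℝ) : ℝ := ⨆ a, f a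

noncomputable def supNorm {ι : Type*} (f : ι → ℝ) : ℝ := ⨆ i, |f i|

section SupAux
variable {ι : Type*} [Fintype ι] [Nonempty ι]

set_option linter.unusedSectionVars false

lemma abs_le_supNorm (f : ι → ℝ) (i : ι) : |f i| ≤ supNorm f := by
  unfold supNorm
  exact le_ciSup (Set.Finite.bddAbove (Set.finite_range fun j => |f j|)) i

lemma supNorm_le {f : ι → ℝ} {B : ℝ} (h : ∀ i, |f i| ≤ B) : supNorm f ≤ B := by
  unfold supNorm; exact ciSup_le h

lemma supNorm_nonneg (f : ι → ℝ) : 0 ≤ supNorm f :=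
  le_trans (abs_nonneg _) (abs_le_supNorm f (Classical.arbitrary _))

lemma le_vmax (f : ι → ℝ) (i : ι) : f i ≤ vmax f := by
  unfold vmax; exact le_ciSup (Set.Finite.bddAbove (Set.finite_range f)) i

lemma vmax_le {f : ι → ℝ} {B : ℝ} (h : ∀ i, f i ≤ B) : vmax f ≤ B := by
  unfold vmax; exact ciSup_le h

lemma abs_vmax_sub_vmax_le {f g : ι → ℝ} {B : ℝ} (h : ∀ i, |f i - g i| ≤ B) :
    |vmax f - vmax g| ≤ B := by
  have h1 : vmax f ≤ vmax g + B := by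
    refine vmax_le fun i => ?_
    have := (abs_le.1 (h i)).2
    have := le_vmax g i
    linarith
  have h2 : vmax g ≤ vmax f + B := by
    refine vmax_le fun i => ?_
    have := (abs_le.1 (h i)).1
    have := le_vmax f i
    linarith
  rw [abs_le]; constructor <;> linarith

lemma vmax_nonneg {f : ι → ℝ} (h : ∀ i, 0 ≤ f i) : 0 ≤ vmax f :=
  le_trans (h (Classical.arbitrary _)) (le_vmax f _)

end SupAux

section Hoeffding

/-- One-step Hoeffding bound for a finite probability vector. -/
lemma hoeffding_step {ι : Type*} [Fintype ι] (μ g : ι → ℝ) (c l : ℝ)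
    (hμ0 : ∀ i, 0 ≤ μ i) (hμ1 : ∑ i, μ i = 1) (hg : ∀ i, |g i| ≤ c)
    (hcent : ∑ i, μ i * g i = 0) (hc : 0 < c) :
    ∑ i, μ i * Real.exp (l * g i) ≤ Real.exp (l ^ 2 * c ^ 2 / 2) := by
  have hcne : c ≠ 0 := ne_of_gt hc
  have chord : ∀ i, Real.exp (l * g i)
      ≤ Real.cosh (l * c) + (g i / c) * Real.sinh (l * c) := by
    intro i
    obtain ⟨hgl, hgu⟩ := abs_le.1 (hg i)
    set x := g i with hx
    have ha : (0:ℝ) ≤ (c - x) / (2 * c) := by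
      apply div_nonneg <;> linarith
    have hb : (0:ℝ) ≤ (c + x) / (2 * c) := by
      apply div_nonneg <;> linarith
    have hab : (c - x) / (2 * c) + (c + x) / (2 * c) = 1 := by
      field_simp; ring
    have key := convexOn_exp.2 (Set.mem_univ (-(l * c))) (Set.mem_univ (l * c)) ha hb hab
    simp only [smul_eq_mul] at key
    have harg : (c - x) / (2 * c) * -(l * c) + (c + x) / (2 * c) * (l * c) = l * x := by
      field_simp; ring
    rw [harg] at key
    refine key.trans (le_of_eq ?_)
    rw [Real.cosh_eq, Real.sinh_eq]
    field_simp
    ring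
  calc ∑ i, μ i * Real.exp (l * g i)
      ≤ ∑ i, μ i * (Real.cosh (l * c) + (g i / c) * Real.sinh (l * c)) := by
        exact Finset.sum_le_sum fun i _ => mul_le_mul_of_nonneg_left (chord i) (hμ0 i)
    _ = Real.cosh (l * c) * (∑ i, μ i)
        + (Real.sinh (l * c) / c) * (∑ i, μ i * g i) := by
        rw [Finset.mul_sum, Finset.mul_sum, ← Finset.sum_add_distrib]
        refine Finset.sum_congr rfl fun i _ => ?_
        field_simp
    _ = Real.cosh (l * c) := by rw [hμ1, hcent]; ring
    _ ≤ Real.exp ((l * c) ^ 2 / 2) := Real.cosh_le_exp_half_sq (l * c)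
    _ = Real.exp (l ^ 2 * c ^ 2 / 2) := by rw [mul_pow]

end Hoeffding

/-- Extend a finite path `v : Fin (n+1) → X` to `ℕ → X`. -/
def pext {X : Type*} {n : ℕ} (v : Fin (n + 1) → X) (i : ℕ) : X :=
  if h : i < n + 1 then v ⟨i, h⟩ else v 0

lemma pext_zero {X : Type*} {n : ℕ} (v : Fin (n + 1) → X) : pext v 0 = v 0 := by
  simp [pext]

lemma pext_cons_zero {X : Type*} {n : ℕ} (x0 : X) (v : Fin (n + 1) → X) :
    pext (Fin.cons x0 v) 0 = x0 := by
  simp [pext]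

lemma pext_cons_succ {X : Type*} {n : ℕ} (x0 : X) (v : Fin (n + 1) → X)
    (i : ℕ) (hi : i < n + 1) : pext (Fin.cons x0 v) (i + 1) = pext v i := by
  have h1 : i + 1 < n + 2 := by omega
  simp only [pext, dif_pos h1, dif_pos hi]
  have : (⟨i + 1, h1⟩ : Fin (n + 2)) = Fin.succ ⟨i, hi⟩ := rfl
  rw [this, Fin.cons_succ]

section MGF
variable {X : Type*} [Fintype X] [DecidableEq X] [Nonempty X]

lemma mgf_path (κ : X → X → ℝ) (hκ0 : ∀ x x', 0 ≤ κ x x') :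
    ∀ (n : ℕ) (w : X → ℝ) (g : ℕ → X → X → ℝ) (B : ℕ → ℝ),
    (∀ x, 0 ≤ w x) →
    (∀ i x, ∑ x', κ x x' * Real.exp (g i x x') ≤ B i) →
    ∑ v : Fin (n + 1) → X, (w (pext v 0) *
        ∏ i ∈ Finset.range n,
          (κ (pext v i) (pext v (i + 1)) * Real.exp (g i (pext v i) (pext v (i + 1)))))
      ≤ (∑ x, w x) * ∏ i ∈ Finset.range n, B i := by
  intro n
  induction n with
  | zero =>
      intro w g B hw hB
      simp only [Finset.range_zero, Finset.prod_empty, mul_one]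
      rw [Fintype.sum_equiv (Equiv.funUnique (Fin 1) X) _ (fun x => w x)
        (fun v => by simp [pext, Equiv.funUnique])]
  | succ n ih =>
      intro w g B hw hB
      have hB0 : ∀ i, 0 ≤ B i := by
        intro i
        refine le_trans ?_ (hB i (Classical.arbitrary X))
        exact Finset.sum_nonneg fun x' _ =>
          mul_nonneg (hκ0 _ _) (le_of_lt (Real.exp_pos _))
      -- reindex by `Fin.cons`
      rw [← Equiv.sum_comp (Fin.consEquiv (fun _ : Fin (n + 2) => X))]
      rw [Fintype.sum_prod_type]
      have key : ∀ x0 : X,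
          ∑ v : Fin (n + 1) → X,
            (w (pext (Fin.consEquiv (fun _ : Fin (n+2) => X) (x0, v)) 0) *
              ∏ i ∈ Finset.range (n + 1),
                (κ (pext (Fin.consEquiv _ (x0, v)) i) (pext (Fin.consEquiv _ (x0, v)) (i + 1))
                  * Real.exp (g i (pext (Fin.consEquiv _ (x0, v)) i)
                      (pext (Fin.consEquiv _ (x0, v)) (i + 1)))))
          ≤ w x0 * B 0 * ∏ i ∈ Finset.range n, B (i + 1) := by
        intro x0
        have hrw : ∀ v : Fin (n + 1) → X,
            (w (pext (Fin.consEquiv (fun _ : Fin (n+2) => X) (x0, v)) 0) *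
              ∏ i ∈ Finset.range (n + 1),
                (κ (pext (Fin.consEquiv _ (x0, v)) i) (pext (Fin.consEquiv _ (x0, v)) (i + 1))
                  * Real.exp (g i (pext (Fin.consEquiv _ (x0, v)) i)
                      (pext (Fin.consEquiv _ (x0, v)) (i + 1)))))
            = (w x0 * (κ x0 (pext v 0) * Real.exp (g 0 x0 (pext v 0)))) *
              ∏ i ∈ Finset.range n,
                (κ (pext v i) (pext v (i + 1))
                  * Real.exp (g (i + 1) (pext v i) (pext v (i + 1)))) := by
          intro v
          have hce : (Fin.consEquiv (fun _ : Fin (n+2) => X)) (x0, v) = Fin.cons x0 v := rfl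
          rw [hce, pext_cons_zero]
          rw [Finset.prod_range_succ' (fun i =>
            (κ (pext (Fin.cons x0 v) i) (pext (Fin.cons x0 v) (i + 1))
              * Real.exp (g i (pext (Fin.cons x0 v) i) (pext (Fin.cons x0 v) (i + 1)))))]
          rw [pext_cons_zero]
          have hterm : ∀ i ∈ Finset.range n,
              (κ (pext (Fin.cons x0 v) (i + 1)) (pext (Fin.cons x0 v) (i + 1 + 1))
                * Real.exp (g (i + 1) (pext (Fin.cons x0 v) (i + 1))
                    (pext (Fin.cons x0 v) (i + 1 + 1))))
              = (κ (pext v i) (pext v (i + 1))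
                  * Real.exp (g (i + 1) (pext v i) (pext v (i + 1)))) := by
            intro i hi
            have hi' : i < n + 1 := by
              have := Finset.mem_range.1 hi; omega
            have hi'' : i + 1 < n + 1 := by
              have := Finset.mem_range.1 hi; omega
            rw [pext_cons_succ x0 v i hi', pext_cons_succ x0 v (i + 1) hi'']
          rw [Finset.prod_congr rfl hterm]
          have h01 : pext (Fin.cons x0 v) 1 = pext v 0 := pext_cons_succ x0 v 0 (by omega)
          rw [h01]
          ring
        rw [Finset.sum_congr rfl (fun v _ => hrw v)]
        have := ih (fun x => w x0 * (κ x0 x * Real.exp (g 0 x0 x)))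
          (fun i => g (i + 1)) (fun i => B (i + 1))
          (fun x => mul_nonneg (hw x0) (mul_nonneg (hκ0 _ _) (le_of_lt (Real.exp_pos _))))
          (fun i x => hB (i + 1) x)
        refine this.trans ?_
        have hsum : ∑ x, w x0 * (κ x0 x * Real.exp (g 0 x0 x))
            = w x0 * ∑ x, κ x0 x * Real.exp (g 0 x0 x) := by
          rw [Finset.mul_sum]
        rw [hsum]
        have h1 : w x0 * ∑ x, κ x0 x * Real.exp (g 0 x0 x) ≤ w x0 * B 0 :=
          mul_le_mul_of_nonneg_left (hB 0 x0) (hw x0)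
        exact mul_le_mul_of_nonneg_right h1 (Finset.prod_nonneg fun i _ => hB0 _)
      calc ∑ x0 : X, ∑ v : Fin (n + 1) → X, _ ≤ ∑ x0 : X, w x0 * B 0 * ∏ i ∈ Finset.range n, B (i + 1) :=
            Finset.sum_le_sum fun x0 _ => key x0
        _ = (∑ x, w x) * ∏ i ∈ Finset.range (n + 1), B i := by
            rw [← Finset.sum_mul, ← Finset.sum_mul]
            rw [Finset.prod_range_succ' B]
            ring
end MGF
section Chernoff
variable {X : Type*} [Fintype X] [DecidableEq X] [Nonempty X]

set_option linter.unusedSectionVars false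

lemma chernoff_sum (κ : X → X → ℝ) (hκ0 : ∀ x x', 0 ≤ κ x x')
    (hκ1 : ∀ x, ∑ x', κ x x' = 1)
    (q0 : X → ℝ) (hq00 : ∀ x, 0 ≤ q0 x) (hq01 : ∑ x, q0 x ≤ 1)
    (y : X → X → ℝ) (c : ℝ) (hc : 0 < c)
    (hybd : ∀ x x', |y x x'| ≤ c) (hycent : ∀ x, ∑ x', κ x x' * y x x' = 0)
    (L : ℝ) (hL : 0 ≤ L) (m n a : ℕ) (hm : 0 < m) (hnm : n - a ≤ m) :
    ∑ v ∈ (Finset.univ : Finset (Fin (n + 1) → X)).filter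
        (fun v => c * Real.sqrt (2 * m * L) < ∑ i ∈ Finset.range n,
          if a ≤ i then y (pext v i) (pext v (i + 1)) else 0),
      (q0 (pext v 0) * ∏ i ∈ Finset.range n, κ (pext v i) (pext v (i + 1)))
      ≤ Real.exp (-L) := by
  set t : ℝ := c * Real.sqrt (2 * m * L) with ht
  set l : ℝ := Real.sqrt (2 * m * L) / (m * c) with hl
  have hm' : (0:ℝ) < m := by exact_mod_cast hm
  have hl0 : 0 ≤ l := by
    apply div_nonneg (Real.sqrt_nonneg _)
    positivity
  have ht0 : 0 ≤ t := mul_nonneg hc.le (Real.sqrt_nonneg _)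
  -- weight of each path
  set q : (Fin (n + 1) → X) → ℝ :=
    fun v => q0 (pext v 0) * ∏ i ∈ Finset.range n, κ (pext v i) (pext v (i + 1)) with hq
  have hq0' : ∀ v, 0 ≤ q v := fun v =>
    mul_nonneg (hq00 _) (Finset.prod_nonneg fun i _ => hκ0 _ _)
  set Sv : (Fin (n + 1) → X) → ℝ :=
    fun v => ∑ i ∈ Finset.range n, if a ≤ i then y (pext v i) (pext v (i + 1)) else 0 with hSv
  set g : ℕ → X → X → ℝ := fun i x x' => if a ≤ i then l * y x x' else 0 with hg
  have step1 : ∑ v ∈ Finset.univ.filter (fun v => t < Sv v), q v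
      ≤ Real.exp (-(l * t)) * ∑ v : Fin (n + 1) → X,
          (q0 (pext v 0) * ∏ i ∈ Finset.range n,
            (κ (pext v i) (pext v (i + 1)) *
              Real.exp (g i (pext v i) (pext v (i + 1))))) := by
    have hterm : ∀ v, q v * Real.exp (l * Sv v)
        = q0 (pext v 0) * ∏ i ∈ Finset.range n,
            (κ (pext v i) (pext v (i + 1)) *
              Real.exp (g i (pext v i) (pext v (i + 1)))) := by
      intro v
      rw [hq]
      have : Real.exp (l * Sv v)
          = ∏ i ∈ Finset.range n, Real.exp (g i (pext v i) (pext v (i + 1))) := by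
        rw [← Real.exp_sum]
        congr 1
        rw [hSv, Finset.mul_sum]
        refine Finset.sum_congr rfl fun i _ => ?_
        by_cases hai : a ≤ i <;> simp [hg, hai]
      rw [this, Finset.prod_mul_distrib]
      ring
    calc ∑ v ∈ Finset.univ.filter (fun v => t < Sv v), q v
        ≤ ∑ v ∈ Finset.univ.filter (fun v => t < Sv v),
            Real.exp (-(l * t)) * (q v * Real.exp (l * Sv v)) := by
          refine Finset.sum_le_sum fun v hv => ?_
          have hvS : t < Sv v := (Finset.mem_filter.1 hv).2
          have h1 : (1:ℝ) ≤ Real.exp (-(l * t)) * Real.exp (l * Sv v) := by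
            rw [← Real.exp_add]
            rw [show -(l * t) + l * Sv v = l * (Sv v - t) by ring]
            apply Real.one_le_exp
            have : 0 ≤ Sv v - t := by linarith
            positivity
          calc q v = q v * 1 := by ring
            _ ≤ q v * (Real.exp (-(l * t)) * Real.exp (l * Sv v)) :=
                mul_le_mul_of_nonneg_left h1 (hq0' v)
            _ = Real.exp (-(l * t)) * (q v * Real.exp (l * Sv v)) := by ring
      _ ≤ ∑ v : Fin (n + 1) → X, Real.exp (-(l * t)) * (q v * Real.exp (l * Sv v)) := by
          refine Finset.sum_le_sum_of_subset_of_nonneg (Finset.filter_subset _ _) ?_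
          intro v _ _
          have := hq0' v
          positivity
      _ = Real.exp (-(l * t)) * ∑ v : Fin (n + 1) → X,
            (q0 (pext v 0) * ∏ i ∈ Finset.range n,
              (κ (pext v i) (pext v (i + 1)) *
                Real.exp (g i (pext v i) (pext v (i + 1))))) := by
          rw [Finset.mul_sum]
          exact Finset.sum_congr rfl fun v _ => by rw [hterm v]
  -- per-step mgf bound
  set B : ℕ → ℝ := fun i => if a ≤ i then Real.exp (l ^ 2 * c ^ 2 / 2) else 1 with hB
  have hBstep : ∀ i x, ∑ x', κ x x' * Real.exp (g i x x') ≤ B i := by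
    intro i x
    by_cases hai : a ≤ i
    · have := hoeffding_step (κ x) (y x) c l (fun x' => hκ0 x x') (hκ1 x)
        (fun x' => hybd x x') (hycent x) hc
      simpa [hg, hai, hB] using this
    · simp [hg, hai, hB, hκ1 x]
  have step2 := mgf_path κ hκ0 n q0 g B hq00 hBstep
  -- product of B
  have hBprod : ∏ i ∈ Finset.range n, B i
      = Real.exp (l ^ 2 * c ^ 2 / 2) ^ ((Finset.range n).filter (fun i => a ≤ i)).card := by
    rw [hB, Finset.prod_ite, Finset.prod_const, Finset.prod_const, one_pow, mul_one]
  have hcard : ((Finset.range n).filter (fun i => a ≤ i)).card = n - a := by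
    have : (Finset.range n).filter (fun i => a ≤ i) = Finset.Ico a n := by
      ext i
      simp [Finset.mem_filter, Finset.mem_range, Finset.mem_Ico, and_comm]
    rw [this, Nat.card_Ico]
  have hfinal : Real.exp (-(l * t)) * ((∑ x, q0 x) * ∏ i ∈ Finset.range n, B i)
      ≤ Real.exp (-L) := by
    rw [hBprod, hcard]
    have h1 : Real.exp (l ^ 2 * c ^ 2 / 2) ^ (n - a)
        ≤ Real.exp (l ^ 2 * c ^ 2 / 2) ^ m := by
      apply pow_le_pow_right₀ (Real.one_le_exp (by positivity)) hnm
    have h2 : Real.exp (-(l * t)) * ((∑ x, q0 x) * Real.exp (l ^ 2 * c ^ 2 / 2) ^ (n - a))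
        ≤ Real.exp (-(l * t)) * (1 * Real.exp (l ^ 2 * c ^ 2 / 2) ^ m) := by
      apply mul_le_mul_of_nonneg_left _ (Real.exp_pos _).le
      apply mul_le_mul hq01 h1 (by positivity)
      norm_num
    refine h2.trans ?_
    rw [one_mul, ← Real.exp_nat_mul, ← Real.exp_add]
    apply Real.exp_le_exp.2
    -- -(l*t) + m * (l^2 c^2/2) ≤ -L
    have hXnn : (0:ℝ) ≤ 2 * m * L := by positivity
    have hss : Real.sqrt (2 * m * L) * Real.sqrt (2 * m * L) = 2 * m * L :=
      Real.mul_self_sqrt hXnn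
    have hmcne : (m:ℝ) * c ≠ 0 := by positivity
    have hmne : (m:ℝ) ≠ 0 := by positivity
    have hlval : l * t = 2 * L := by
      rw [hl, ht, div_mul_eq_mul_div]
      rw [show Real.sqrt (2 * m * L) * (c * Real.sqrt (2 * m * L))
        = (Real.sqrt (2 * m * L) * Real.sqrt (2 * m * L)) * c from by ring, hss]
      field_simp
    have hl2 : l ^ 2 * c ^ 2 = 2 * L / m := by
      rw [hl, div_pow]
      rw [show Real.sqrt (2 * m * L) ^ 2
        = Real.sqrt (2 * m * L) * Real.sqrt (2 * m * L) from sq _, hss]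
      field_simp
    rw [hlval, hl2]
    have hmm : (m:ℝ) * (2 * L / m / 2) = L := by field_simp
    linarith
  calc ∑ v ∈ Finset.univ.filter (fun v => t < Sv v), q v ≤ _ := step1
    _ ≤ Real.exp (-(l * t)) * ((∑ x, q0 x) * ∏ i ∈ Finset.range n, B i) :=
        mul_le_mul_of_nonneg_left step2 (Real.exp_pos _).le
    _ ≤ Real.exp (-L) := hfinal

end Chernoff

/-- Auxiliary recursion capturing the martingale part of the local updates. -/
noncomputable def driftM (η : ℝ) (p : ℕ → Prop) [DecidablePred p] (z : ℕ → ℝ) : ℕ → ℝ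
  | 0 => 0
  | j + 1 => if p j then (1 - η) * driftM η p z j + η * z j else driftM η p z j

lemma driftM_abs (η : ℝ) (hη0 : 0 < η) (hη1 : η < 1) (p : ℕ → Prop) [DecidablePred p]
    (z : ℕ → ℝ) (G : ℝ) (hG : 0 ≤ G) (J : ℕ)
    (hs : ∀ j ≤ J, |∑ i ∈ Finset.range j, if p i then z i else 0| ≤ G) :
    ∀ j ≤ J, |driftM η p z j| ≤ 2 * η * G := by
  set S : ℕ → ℝ := fun j => ∑ i ∈ Finset.range j, if p i then z i else 0 with hS
  have key : ∀ j ≤ J, |driftM η p z j - η * S j| ≤ η * G := by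
    intro j
    induction j with
    | zero => intro _; simp only [driftM, hS]; simp; positivity
    | succ j ih =>
        intro hj
        have hj' : j ≤ J := by omega
        have ihj := ih hj'
        have hSj := hs j hj'
        by_cases hp : p j
        · have hM : driftM η p z (j + 1) = (1 - η) * driftM η p z j + η * z j := by
            simp [driftM, hp]
          have hSs : S (j + 1) = S j + z j := by
            simp [hS, Finset.sum_range_succ, hp]
          have heq : driftM η p z (j + 1) - η * S (j + 1)
              = (1 - η) * (driftM η p z j - η * S j) - η ^ 2 * S j := by
            rw [hM, hSs]; ring
          rw [heq]
          calc |(1 - η) * (driftM η p z j - η * S j) - η ^ 2 * S j|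
              ≤ |(1 - η) * (driftM η p z j - η * S j)| + |η ^ 2 * S j| := abs_sub _ _
            _ = (1 - η) * |driftM η p z j - η * S j| + η ^ 2 * |S j| := by
                rw [abs_mul, abs_mul, abs_of_nonneg (by linarith : (0:ℝ) ≤ 1 - η),
                  abs_of_nonneg (by positivity : (0:ℝ) ≤ η ^ 2)]
            _ ≤ (1 - η) * (η * G) + η ^ 2 * G := by
                have h1 : (0:ℝ) ≤ 1 - η := by linarith
                have h2 : (0:ℝ) ≤ η ^ 2 := by positivity
                gcongr
            _ = η * G := by ring
        · have hM : driftM η p z (j + 1) = driftM η p z j := by simp [driftM, hp]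
          have hSs : S (j + 1) = S j := by simp [hS, Finset.sum_range_succ, hp]
          rw [hM, hSs]; exact ihj
  intro j hj
  have h1 := key j hj
  have h2 := hs j hj
  have : |driftM η p z j| ≤ |driftM η p z j - η * S j| + |η * S j| := by
    have := abs_sub_abs_le_abs_sub (driftM η p z j) (η * S j)
    have h3 := abs_add_le (driftM η p z j - η * S j) (η * S j)
    calc |driftM η p z j| = |(driftM η p z j - η * S j) + η * S j| := by ring_nf
      _ ≤ _ := h3
  have h4 : |η * S j| ≤ η * G := by
    rw [abs_mul, abs_of_nonneg hη0.le]
    exact mul_le_mul_of_nonneg_left h2 hη0.le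
  calc |driftM η p z j| ≤ |driftM η p z j - η * S j| + |η * S j| := this
    _ ≤ η * G + η * G := add_le_add h1 h4
    _ = 2 * η * G := by ring

set_option maxHeartbeats 2000000 in
/-- drift bound between synchronizations. -/
theorem fedAsynQ_drift_bound
    {S A : Type*} [Fintype S] [Fintype A] [Nonempty S] [Nonempty A]
    [DecidableEq S] [DecidableEq A]
    [MeasurableSpace S] [MeasurableSingletonClass S]
    [MeasurableSpace A] [MeasurableSingletonClass A]
    {Ω : Type*} [MeasurableSpace Ω] (Pr : Measure Ω) [IsProbabilityMeasure Pr]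
    -- the MDP
    (P : S × A → S → ℝ) (r : S × A → ℝ) (γ : ℝ)
    (hP0 : ∀ sa s', 0 ≤ P sa s') (hP1 : ∀ sa, ∑ s', P sa s' = 1)
    (hr : ∀ sa, r sa ∈ Set.Icc (0 : ℝ) 1) (hγ : γ ∈ Set.Ico (0 : ℝ) 1)
    -- the optimal Q-function (Bellman fixed point)
    (Qstar : S × A → ℝ)
    (hQstar : ∀ sa, Qstar sa
        = r sa + γ * ∑ s', P sa s' * vmax fun a' => Qstar (s', a'))
    -- algorithm parameters
    (K : ℕ) (hK : 0 < K) (T τ : ℕ) (hT : 0 < T) (hτ : 0 < τ) (hτT : τ ∣ T)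
    (η : ℝ) (hη0 : 0 < η) (hη1 : η < 1)
    (δ : ℝ) (hδ : δ ∈ Set.Ioo (0 : ℝ) 1)
    -- behavior policies and the induced Markov chains on `S × A`
    (πb : Fin K → S → A → ℝ)
    (hπb0 : ∀ k s a, 0 ≤ πb k s a) (hπb1 : ∀ k s, ∑ a, πb k s a = 1)
    (κ : Fin K → S × A → S × A → ℝ)
    (hκ : ∀ k sa sa', κ k sa sa' = P sa sa'.1 * πb k sa'.1 sa'.2)
    -- the Markovian trajectories of the agents
    (traj : Fin K → ℕ → Ω → S × A)
    (htraj_meas : ∀ k t, Measurable (traj k t))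
    (hMarkov : ∀ (k : Fin K) (n : ℕ) (x : ℕ → S × A),
      Pr {ω | ∀ i ≤ n, traj k i ω = x i}
        = Pr {ω | traj k 0 ω = x 0}
            * ENNReal.ofReal (∏ i ∈ Finset.range n, κ k (x i) (x (i + 1))))
    (hindep : iIndepFun (fun (k : Fin K) ω t => traj k t ω) Pr)
    -- the iterates of FedAsynQ with arbitrary nonnegative aggregation weights
    (α : ℕ → Fin K → S × A → Ω → ℝ)
    (hα0 : ∀ t k sa ω, 0 ≤ α t k sa ω)
    (hα1 : ∀ t sa ω, ∑ k : Fin K, α t k sa ω = 1)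
    (Q0 : S × A → ℝ) (hQ0 : ∀ sa, Q0 sa ∈ Set.Icc (0 : ℝ) (1 / (1 - γ)))
    (Q Qhalf : ℕ → Fin K → S × A → Ω → ℝ)
    (hinit : ∀ k sa ω, Q 0 k sa ω = Q0 sa)
    (hupd : ∀ t k sa ω, Qhalf (t + 1) k sa ω
        = if sa = traj k t ω then
            (1 - η) * Q t k sa ω
              + η * (r sa + γ * vmax fun a' => Q t k ((traj k (t + 1) ω).1, a') ω)
          else Q t k sa ω)
    (havg : ∀ t k sa ω, Q (t + 1) k sa ω
        = if τ ∣ (t + 1) then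
            ∑ k' : Fin K, α (t + 1) k' sa ω * Qhalf (t + 1) k' sa ω
          else Qhalf (t + 1) k sa ω)
    -- the learning rate condition `ητ ≤ 1/2`
    (hητ : η * τ ≤ 1 / 2) :
    Pr {ω | ∀ k : Fin K, ∀ u < T,
          supNorm (fun sa : S × A => Q u k sa ω - Q (τ * (u / τ)) k sa ω)
            ≤ 2 * η * τ
                * supNorm (fun sa : S × A => Qstar sa - Q (τ * (u / τ)) k sa ω)
              + 8 * γ * η * Real.sqrt ((τ : ℝ) - 1) / (1 - γ)
                * Real.sqrt
                    (Real.log (2 * (Fintype.card S) * (Fintype.card A) * T * K / δ))}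
      ≥ ENNReal.ofReal (1 - δ) := by
  classical
  obtain ⟨hγ0, hγ1⟩ := hγ
  obtain ⟨hδ0, hδ1⟩ := hδ
  have h1γ : (0:ℝ) < 1 - γ := by linarith
  -- value function of `Qstar` and its expectation under `P`
  set Vs : S → ℝ := fun s => vmax fun a => Qstar (s, a) with hVsdef
  set mf : S × A → ℝ := fun x => ∑ s', P x s' * Vs s' with hmfdef
  -- bounds on `Qstar`
  have hQsub : ∀ sa, Qstar sa ≤ 1 / (1 - γ) := by
    obtain ⟨sa0, _, hmax⟩ := Finset.exists_max_image Finset.univ Qstar ⟨Classical.arbitrary _, Finset.mem_univ _⟩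
    have hVle : ∀ s', Vs s' ≤ Qstar sa0 := fun s' =>
      vmax_le fun a => hmax (s', a) (Finset.mem_univ _)
    have hsum : ∑ s', P sa0 s' * Vs s' ≤ Qstar sa0 := by
      calc ∑ s', P sa0 s' * Vs s' ≤ ∑ s', P sa0 s' * Qstar sa0 :=
            Finset.sum_le_sum fun s' _ =>
              mul_le_mul_of_nonneg_left (hVle s') (hP0 sa0 s')
        _ = Qstar sa0 := by rw [← Finset.sum_mul, hP1, one_mul]
    have h0 : Qstar sa0 ≤ 1 + γ * Qstar sa0 := by
      have hbell := hQstar sa0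
      have hr1 := (hr sa0).2
      have hmono : γ * ∑ s', P sa0 s' * vmax (fun a' => Qstar (s', a')) ≤ γ * Qstar sa0 :=
        mul_le_mul_of_nonneg_left hsum hγ0
      linarith
    have hsa0 : Qstar sa0 ≤ 1 / (1 - γ) := by
      rw [le_div_iff₀ h1γ]; nlinarith
    intro sa
    exact le_trans (hmax sa (Finset.mem_univ _)) hsa0
  have hQslb : ∀ sa, 0 ≤ Qstar sa := by
    obtain ⟨sa1, _, hmin⟩ := Finset.exists_min_image Finset.univ Qstar ⟨Classical.arbitrary _, Finset.mem_univ _⟩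
    have hVge : ∀ s', Qstar sa1 ≤ Vs s' := fun s' =>
      le_trans (hmin (s', Classical.arbitrary A) (Finset.mem_univ _))
        (le_vmax (fun a => Qstar (s', a)) (Classical.arbitrary A))
    have hsum : Qstar sa1 ≤ ∑ s', P sa1 s' * Vs s' := by
      calc Qstar sa1 = ∑ s', P sa1 s' * Qstar sa1 := by
            rw [← Finset.sum_mul, hP1, one_mul]
        _ ≤ ∑ s', P sa1 s' * Vs s' :=
            Finset.sum_le_sum fun s' _ =>
              mul_le_mul_of_nonneg_left (hVge s') (hP0 sa1 s')
    have h0 : γ * Qstar sa1 ≤ Qstar sa1 := by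
      have hbell := hQstar sa1
      have hr0 := (hr sa1).1
      have hmono : γ * Qstar sa1 ≤ γ * ∑ s', P sa1 s' * vmax (fun a' => Qstar (s', a')) :=
        mul_le_mul_of_nonneg_left hsum hγ0
      linarith
    have hsa1 : 0 ≤ Qstar sa1 := by nlinarith
    intro sa
    exact le_trans hsa1 (hmin sa (Finset.mem_univ _))
  have hVs0 : ∀ s, 0 ≤ Vs s := by
    intro s
    simp only [hVsdef]
    exact le_trans (hQslb (s, Classical.arbitrary A))
      (le_vmax (fun a => Qstar (s, a)) (Classical.arbitrary A))
  have hVs1 : ∀ s, Vs s ≤ 1 / (1 - γ) := by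
    intro s
    simp only [hVsdef]
    exact vmax_le fun a => hQsub (s, a)
  have hmf0 : ∀ x, 0 ≤ mf x := fun x =>
    Finset.sum_nonneg fun s' _ => mul_nonneg (hP0 x s') (hVs0 s')
  have hmf1 : ∀ x, mf x ≤ 1 / (1 - γ) := by
    intro x
    calc mf x ≤ ∑ s', P x s' * (1 / (1 - γ)) :=
          Finset.sum_le_sum fun s' _ =>
            mul_le_mul_of_nonneg_left (hVs1 s') (hP0 x s')
      _ = 1 / (1 - γ) := by rw [← Finset.sum_mul, hP1, one_mul]
  -- noise kernel and its properties
  set c : ℝ := γ / (1 - γ) with hcdef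
  have hc0 : 0 ≤ c := div_nonneg hγ0 h1γ.le
  set y : (S × A) → (S × A) → (S × A) → ℝ :=
    fun sa x x' => if x = sa then γ * (Vs x'.1 - mf x) else 0 with hydef
  have hybd : ∀ sa x x', |y sa x x'| ≤ c := by
    intro sa x x'
    by_cases hx : x = sa
    · simp only [hydef, if_pos hx]
      rw [abs_mul, abs_of_nonneg hγ0, hcdef]
      rw [div_eq_mul_one_div]
      apply mul_le_mul_of_nonneg_left _ hγ0
      rw [abs_le]
      constructor
      · have := hVs0 x'.1; have := hmf1 x; linarith
      · have := hVs1 x'.1; have := hmf0 x; linarith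
    · simp [hydef, if_neg hx, hc0]
  have hκ0 : ∀ k x x', 0 ≤ κ k x x' := by
    intro k x x'
    rw [hκ]
    exact mul_nonneg (hP0 _ _) (hπb0 _ _ _)
  have hκ1 : ∀ k x, ∑ x', κ k x x' = 1 := by
    intro k x
    rw [Fintype.sum_prod_type]
    have : ∀ s' : S, ∑ a' : A, κ k x (s', a') = P x s' := by
      intro s'
      simp only [hκ]
      rw [← Finset.mul_sum, hπb1, mul_one]
    rw [Finset.sum_congr rfl fun s' _ => this s']
    exact hP1 x
  have hκV : ∀ k x, ∑ x', κ k x x' * Vs x'.1 = mf x := by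
    intro k x
    rw [Fintype.sum_prod_type]
    have : ∀ s' : S, ∑ a' : A, κ k x (s', a') * Vs s' = P x s' * Vs s' := by
      intro s'
      simp only [hκ]
      rw [← Finset.sum_mul, ← Finset.mul_sum, hπb1, mul_one]
    rw [Finset.sum_congr rfl fun s' _ => this s']
  have hycent : ∀ k sa x, ∑ x', κ k x x' * y sa x x' = 0 := by
    intro k sa x
    by_cases hx : x = sa
    · simp only [hydef, if_pos hx]
      have : ∀ x', κ k x x' * (γ * (Vs x'.1 - mf x))
          = γ * (κ k x x' * Vs x'.1) - γ * (κ k x x' * mf x) := by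
        intro x'; ring
      rw [Finset.sum_congr rfl fun x' _ => this x', Finset.sum_sub_distrib,
        ← Finset.mul_sum, ← Finset.mul_sum, hκV, ← Finset.sum_mul, hκ1, one_mul]
      ring
    · simp [hydef, if_neg hx]
  -- the log factor
  set L : ℝ := Real.log (2 * (Fintype.card S) * (Fintype.card A) * T * K / δ) with hLdef
  have hcS : (1:ℝ) ≤ Fintype.card S := by exact_mod_cast Fintype.card_pos
  have hcA : (1:ℝ) ≤ Fintype.card A := by exact_mod_cast Fintype.card_pos
  have hTr : (1:ℝ) ≤ T := by exact_mod_cast hT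
  have hKr : (1:ℝ) ≤ K := by exact_mod_cast hK
  have hnum2 : (2:ℝ) ≤ 2 * (Fintype.card S) * (Fintype.card A) * T * K := by
    have h1 : (1:ℝ) ≤ (Fintype.card S : ℝ) * (Fintype.card A) := by nlinarith
    have h2 : (1:ℝ) ≤ (Fintype.card S : ℝ) * (Fintype.card A) * T := by nlinarith
    have h3 : (1:ℝ) ≤ (Fintype.card S : ℝ) * (Fintype.card A) * T * K := by nlinarith
    nlinarith
  have hargpos : (0:ℝ) < 2 * (Fintype.card S) * (Fintype.card A) * T * K / δ := by
    apply div_pos (by linarith) hδ0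
  have harg1 : (1:ℝ) ≤ 2 * (Fintype.card S) * (Fintype.card A) * T * K / δ := by
    rw [le_div_iff₀ hδ0]; linarith
  have hL0 : 0 ≤ L := Real.log_nonneg harg1
  have hexpL : Real.exp (-L) = δ / (2 * (Fintype.card S) * (Fintype.card A) * T * K) := by
    rw [hLdef, ← Real.log_inv, Real.exp_log (by positivity)]
    rw [inv_div]
  set mm : ℕ := τ - 1 with hmmdef
  have hmmr : (mm:ℝ) = (τ:ℝ) - 1 := by
    rw [hmmdef]
    have : (1:ℕ) ≤ τ := hτ
    push_cast [Nat.cast_sub this]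
    ring
  set t : ℝ := c * Real.sqrt (2 * mm * L) with htdef
  have ht0 : 0 ≤ t := mul_nonneg hc0 (Real.sqrt_nonneg _)
  -- initial distributions
  set q0 : Fin K → (S × A) → ℝ := fun k x => (Pr {ω | traj k 0 ω = x}).toReal with hq0def
  have hq00 : ∀ k x, 0 ≤ q0 k x := fun k x => ENNReal.toReal_nonneg
  have hq01 : ∀ k, ∑ x, q0 k x ≤ 1 := by
    intro k
    have hmeas : ∀ x : S × A, MeasurableSet {ω | traj k 0 ω = x} := by
      intro x
      exact (htraj_meas k 0) (measurableSet_singleton x)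
    have hdisj : (↑(Finset.univ : Finset (S × A)) : Set (S × A)).PairwiseDisjoint
        (fun x => {ω | traj k 0 ω = x}) := by
      intro x _ x' _ hxx'
      refine Set.disjoint_left.2 fun ω h1 h2 => hxx' ?_
      exact h1.symm.trans h2
    have hsum : ∑ x : S × A, Pr {ω | traj k 0 ω = x}
        = Pr (⋃ x ∈ (Finset.univ : Finset (S × A)), {ω | traj k 0 ω = x}) :=
      (measure_biUnion_finset hdisj (fun x _ => hmeas x)).symm
    have hle : Pr (⋃ x ∈ (Finset.univ : Finset (S × A)), {ω | traj k 0 ω = x}) ≤ 1 :=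
      prob_le_one
    calc ∑ x, q0 k x = (∑ x : S × A, Pr {ω | traj k 0 ω = x}).toReal :=
          (ENNReal.toReal_sum (fun x _ => measure_ne_top Pr _)).symm
      _ ≤ (1 : ENNReal).toReal := ENNReal.toReal_mono (by norm_num) (hsum ▸ hle)
      _ = 1 := ENNReal.toReal_one
  -- the bad events
  set Bad : Fin K × (S × A) × Fin T × Bool → Set Ω := fun idx =>
    {ω | t < ∑ i ∈ Finset.Ico (τ * ((idx.2.2.1 : ℕ) / τ)) (idx.2.2.1 : ℕ),
        (if idx.2.2.2 = true then y idx.2.1 (traj idx.1 i ω) (traj idx.1 (i + 1) ω)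
          else -y idx.2.1 (traj idx.1 i ω) (traj idx.1 (i + 1) ω))} with hBaddef
  have hBadPr : ∀ idx, Pr (Bad idx) ≤ ENNReal.ofReal (Real.exp (-L)) := by
    rintro ⟨k, sa, w, b⟩
    set n : ℕ := (w : ℕ) with hndef
    set a : ℕ := τ * (n / τ) with hadef
    have han : a ≤ n := by
      rw [hadef, mul_comm]; exact Nat.div_mul_le_self n τ
    set ys : (S × A) → (S × A) → ℝ :=
      fun x x' => if b = true then y sa x x' else -y sa x x' with hysdef
    have hBadeq : Bad (k, sa, w, b)
        = {ω | t < ∑ i ∈ Finset.Ico a n, ys (traj k i ω) (traj k (i + 1) ω)} := rfl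
    by_cases hdeg : γ = 0 ∨ a = n
    · have hempty : Bad (k, sa, w, b) = ∅ := by
        rw [hBadeq]
        apply Set.eq_empty_iff_forall_notMem.2
        intro ω hω
        simp only [Set.mem_setOf_eq] at hω
        have hzero : ∑ i ∈ Finset.Ico a n, ys (traj k i ω) (traj k (i + 1) ω) = 0 := by
          rcases hdeg with hγz | haz
          · apply Finset.sum_eq_zero
            intro i _
            simp only [hysdef, hydef, hγz]
            by_cases hxx : traj k i ω = sa <;> by_cases hb : b = true <;>
              simp [hxx, hb]
          · rw [haz]; simp
        rw [hzero] at hω; linarith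
      rw [hempty]; simp
    · push_neg at hdeg
      obtain ⟨hγne, hane⟩ := hdeg
      have hγpos : 0 < γ := lt_of_le_of_ne hγ0 (Ne.symm hγne)
      have hcpos : 0 < c := by rw [hcdef]; positivity
      have hanlt : a < n := lt_of_le_of_ne han hane
      have hja : n - a = n % τ := by
        have := Nat.div_add_mod n τ
        omega
      have hjm : n - a ≤ mm := by
        have h1 : n % τ < τ := Nat.mod_lt _ hτ
        omega
      have hmm0 : 0 < mm := by omega
      have hysval : ∀ x x', ys x x' = if b = true then y sa x x' else -y sa x x' :=
        fun x x' => rfl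
      have hysbd : ∀ x x', |ys x x'| ≤ c := by
        intro x x'
        have h := hybd sa x x'
        by_cases hb : b = true
        · rw [hysval, if_pos hb]; exact h
        · rw [hysval, if_neg hb, abs_neg]; exact h
      have hyscent : ∀ x, ∑ x', κ k x x' * ys x x' = 0 := by
        intro x
        have hpos := hycent k sa x
        by_cases hb : b = true
        · have h1 : ∑ x', κ k x x' * ys x x' = ∑ x', κ k x x' * y sa x x' :=
            Finset.sum_congr rfl fun x' _ => by rw [hysval, if_pos hb]
          rw [h1]; exact hpos
        · have h1 : ∑ x', κ k x x' * ys x x' = -∑ x', κ k x x' * y sa x x' := by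
            rw [← Finset.sum_neg_distrib]
            refine Finset.sum_congr rfl fun x' _ => ?_
            rw [hysval, if_neg hb]; ring
          rw [h1, hpos, neg_zero]
      set Vbad : Finset (Fin (n + 1) → S × A) :=
        Finset.univ.filter (fun v => c * Real.sqrt (2 * mm * L) < ∑ i ∈ Finset.range n,
          if a ≤ i then ys (pext v i) (pext v (i + 1)) else 0) with hVbaddef
      have hcover : Bad (k, sa, w, b)
          ⊆ ⋃ v ∈ Vbad, {ω | ∀ i ≤ n, traj k i ω = pext v i} := by
        intro ω hω
        rw [hBadeq] at hω
        simp only [Set.mem_setOf_eq] at hω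
        set v : Fin (n + 1) → S × A := fun i => traj k (i : ℕ) ω with hvdef
        have hext : ∀ i ≤ n, pext v i = traj k i ω := by
          intro i hi
          have hi' : i < n + 1 := by omega
          simp [pext, dif_pos hi', hvdef]
        have hsums : ∑ i ∈ Finset.range n, (if a ≤ i then ys (pext v i) (pext v (i + 1)) else 0)
            = ∑ i ∈ Finset.Ico a n, ys (traj k i ω) (traj k (i + 1) ω) := by
          rw [← Finset.sum_filter]
          have hfil : (Finset.range n).filter (fun i => a ≤ i) = Finset.Ico a n := by
            ext i
            simp only [Finset.mem_filter, Finset.mem_range, Finset.mem_Ico]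
            omega
          rw [hfil]
          refine Finset.sum_congr rfl fun i hi => ?_
          have hi2 : i < n := (Finset.mem_Ico.1 hi).2
          rw [hext i (le_of_lt hi2), hext (i + 1) (by omega)]
        have hvV : v ∈ Vbad := by
          rw [hVbaddef]
          refine Finset.mem_filter.2 ⟨Finset.mem_univ _, ?_⟩
          rw [hsums, ← htdef]
          exact hω
        exact Set.mem_iUnion₂.2 ⟨v, hvV, fun i hi => (hext i hi).symm⟩
      have hcyl : ∀ v : Fin (n + 1) → S × A,
          Pr {ω | ∀ i ≤ n, traj k i ω = pext v i}
            = ENNReal.ofReal (q0 k (pext v 0) *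
                ∏ i ∈ Finset.range n, κ k (pext v i) (pext v (i + 1))) := by
        intro v
        rw [hMarkov k n (pext v)]
        rw [ENNReal.ofReal_mul (hq00 k (pext v 0))]
        congr 1
        rw [hq0def]
        exact (ENNReal.ofReal_toReal (measure_ne_top Pr _)).symm
      have hchern := chernoff_sum (κ k) (hκ0 k) (hκ1 k) (q0 k) (hq00 k) (hq01 k)
        ys c hcpos hysbd hyscent L hL0 mm n a hmm0 hjm
      calc Pr (Bad (k, sa, w, b))
          ≤ Pr (⋃ v ∈ Vbad, {ω | ∀ i ≤ n, traj k i ω = pext v i}) := measure_mono hcover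
        _ ≤ ∑ v ∈ Vbad, Pr {ω | ∀ i ≤ n, traj k i ω = pext v i} :=
            measure_biUnion_finset_le _ _
        _ = ∑ v ∈ Vbad, ENNReal.ofReal (q0 k (pext v 0) *
              ∏ i ∈ Finset.range n, κ k (pext v i) (pext v (i + 1))) :=
            Finset.sum_congr rfl fun v _ => hcyl v
        _ = ENNReal.ofReal (∑ v ∈ Vbad, q0 k (pext v 0) *
              ∏ i ∈ Finset.range n, κ k (pext v i) (pext v (i + 1))) :=
            (ENNReal.ofReal_sum_of_nonneg fun v _ =>
              mul_nonneg (hq00 k _) (Finset.prod_nonneg fun i _ => hκ0 k _ _)).symm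
        _ ≤ ENNReal.ofReal (Real.exp (-L)) := ENNReal.ofReal_le_ofReal hchern
  -- union bound
  set BigU : Set Ω :=
    ⋃ idx ∈ (Finset.univ : Finset (Fin K × (S × A) × Fin T × Bool)), Bad idx with hBigUdef
  have hcardI : (Fintype.card (Fin K × (S × A) × Fin T × Bool) : ℝ) * Real.exp (-L) = δ := by
    rw [hexpL]
    have hcard : (Fintype.card (Fin K × (S × A) × Fin T × Bool) : ℝ)
        = (K : ℝ) * ((Fintype.card S : ℝ) * (Fintype.card A : ℝ)) * ((T : ℝ) * 2) := by
      simp only [Fintype.card_prod, Fintype.card_fin, Fintype.card_bool]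
      push_cast
      ring
    rw [hcard]
    have hden : (0:ℝ) < 2 * (Fintype.card S) * (Fintype.card A) * T * K := by linarith
    field_simp
  have hPrBigU : Pr BigU ≤ ENNReal.ofReal δ := by
    calc Pr BigU ≤ ∑ idx ∈ (Finset.univ : Finset (Fin K × (S × A) × Fin T × Bool)),
          Pr (Bad idx) := by
          rw [hBigUdef]; exact measure_biUnion_finset_le _ _
      _ ≤ ∑ _idx ∈ (Finset.univ : Finset (Fin K × (S × A) × Fin T × Bool)),
            ENNReal.ofReal (Real.exp (-L)) :=
          Finset.sum_le_sum fun idx _ => hBadPr idx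
      _ = (Fintype.card (Fin K × (S × A) × Fin T × Bool))
            • ENNReal.ofReal (Real.exp (-L)) := by
          rw [Finset.sum_const, Finset.card_univ]
      _ = ENNReal.ofReal δ := by
          rw [nsmul_eq_mul, ← ENNReal.ofReal_natCast, ← ENNReal.ofReal_mul (by positivity),
            hcardI]
  -- the good event implies the drift bounds
  have hsub : BigUᶜ ⊆ {ω | ∀ k : Fin K, ∀ u < T,
        supNorm (fun sa : S × A => Q u k sa ω - Q (τ * (u / τ)) k sa ω)
          ≤ 2 * η * τ * supNorm (fun sa : S × A => Qstar sa - Q (τ * (u / τ)) k sa ω)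
            + 8 * γ * η * Real.sqrt ((τ : ℝ) - 1) / (1 - γ) * Real.sqrt L} := by
    intro ω hω
    have hgood : ∀ idx, ω ∉ Bad idx := by
      intro idx hmem
      apply hω
      rw [hBigUdef]
      exact Set.mem_iUnion₂.2 ⟨idx, Finset.mem_univ idx, hmem⟩
    intro k u hu
    set a : ℕ := τ * (u / τ) with hadef
    have hau : a ≤ u := by rw [hadef, mul_comm]; exact Nat.div_mul_le_self u τ
    set J : ℕ := u - a with hJdef
    have hJmod : J = u % τ := by
      have := Nat.div_add_mod u τ
      omega
    have hJmm : J ≤ mm := by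
      have h1 : u % τ < τ := Nat.mod_lt _ hτ
      omega
    have huaJ : a + J = u := by omega
    -- partial-sum bounds from the good event
    have hps : ∀ sa : S × A, ∀ j ≤ J,
        |∑ i ∈ Finset.range j,
            (if sa = traj k (a + i) ω then
              γ * (Vs ((traj k (a + i + 1) ω)).1 - mf (traj k (a + i) ω)) else 0)| ≤ t := by
      intro sa j hj
      have hwlt : a + j < T := by omega
      have hjτ : j < τ := by omega
      have hdivq : (a + j) / τ = u / τ := by
        rw [hadef, Nat.mul_add_div hτ, Nat.div_eq_of_lt hjτ, Nat.add_zero]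
      have hbt := hgood (k, sa, ⟨a + j, hwlt⟩, true)
      have hbf := hgood (k, sa, ⟨a + j, hwlt⟩, false)
      simp only [hBaddef, Set.mem_setOf_eq, not_lt, reduceIte] at hbt hbf
      simp only [show ((⟨a + j, hwlt⟩ : Fin T) : ℕ) = a + j from rfl, hdivq, ← hadef]
        at hbt hbf
      rw [Finset.sum_Ico_eq_sum_range] at hbt hbf
      rw [show a + j - a = j from by omega] at hbt hbf
      have hterm : ∀ i : ℕ, y sa (traj k (a + i) ω) (traj k (a + i + 1) ω)
          = (if sa = traj k (a + i) ω then
              γ * (Vs ((traj k (a + i + 1) ω)).1 - mf (traj k (a + i) ω)) else 0) := by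
        intro i
        simp only [hydef]
        by_cases h : sa = traj k (a + i) ω
        · rw [if_pos h.symm, if_pos h]
        · rw [if_neg (fun hh => h hh.symm), if_neg h]
      rw [Finset.sum_congr rfl fun i _ => hterm i] at hbt
      have hbf' : -∑ i ∈ Finset.range j,
          (if sa = traj k (a + i) ω then
            γ * (Vs ((traj k (a + i + 1) ω)).1 - mf (traj k (a + i) ω)) else 0) ≤ t := by
        rw [← Finset.sum_neg_distrib]
        calc ∑ i ∈ Finset.range j, -(if sa = traj k (a + i) ω then
              γ * (Vs ((traj k (a + i + 1) ω)).1 - mf (traj k (a + i) ω)) else 0)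
            = ∑ i ∈ Finset.range j, -y sa (traj k (a + i) ω) (traj k (a + i + 1) ω) :=
              Finset.sum_congr rfl fun i _ => by rw [hterm i]
          _ ≤ t := hbf
      exact abs_le.2 ⟨by linarith, hbt⟩
    -- drift decomposition
    set Δ : ℝ := supNorm (fun sa : S × A => Qstar sa - Q a k sa ω) with hΔdef
    have hΔ0 : 0 ≤ Δ := by rw [hΔdef]; exact supNorm_nonneg _
    set C : ℝ := (1 + γ) * Δ + 2 * γ * η * t with hCdef
    have hC0 : 0 ≤ C := by
      rw [hCdef]
      have h1 : (0:ℝ) ≤ (1 + γ) * Δ := mul_nonneg (by linarith) hΔ0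
      have h2 : (0:ℝ) ≤ 2 * γ * η * t := by positivity
      linarith
    set M : (S × A) → ℕ → ℝ := fun sa j => driftM η (fun i => sa = traj k (a + i) ω)
        (fun i => γ * (Vs ((traj k (a + i + 1) ω)).1 - mf (traj k (a + i) ω))) j with hMdef
    have hMb : ∀ sa : S × A, ∀ j ≤ J, |M sa j| ≤ 2 * η * t := by
      intro sa
      simp only [hMdef]
      exact driftM_abs η hη0 hη1 _ _ t ht0 J (hps sa)
    have hA : ∀ j, j ≤ J → ∀ sa : S × A,
        |Q (a + j) k sa ω - Q a k sa ω - M sa j| ≤ (j : ℝ) * η * C := by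
      intro j
      induction j with
      | zero =>
          intro _ sa
          simp only [hMdef, driftM, Nat.add_zero, Nat.cast_zero]
          simp
      | succ j ih =>
          intro hj sa
          have hjJ : j ≤ J := by omega
          have hndiv : ¬ τ ∣ (a + j + 1) := by
            intro hdvd
            have hdvda : τ ∣ a := ⟨u / τ, hadef⟩
            have hdvdj : τ ∣ (j + 1) := by
              have he : a + j + 1 = a + (j + 1) := by omega
              rw [he] at hdvd
              exact (Nat.dvd_add_right hdvda).1 hdvd
            have := Nat.le_of_dvd (by omega) hdvdj
            omega
          have hidx : a + (j + 1) = (a + j) + 1 := by omega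
          by_cases hsa : sa = traj k (a + j) ω
          · have hM1 : M sa (j + 1) = (1 - η) * M sa j
                + η * (γ * (Vs ((traj k (a + j + 1) ω)).1 - mf (traj k (a + j) ω))) := by
              simp only [hMdef, driftM]
              rw [if_pos hsa]
            have hQ1 : Q (a + (j + 1)) k sa ω = (1 - η) * Q (a + j) k sa ω
                + η * (r sa + γ * vmax fun a' => Q (a + j) k ((traj k (a + j + 1) ω).1, a') ω) := by
              rw [hidx, havg (a + j) k sa ω, if_neg hndiv, hupd (a + j) k sa ω, if_pos hsa]
            have hrsa : r sa = Qstar sa - γ * mf sa := by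
              have hb := hQstar sa
              have hmfsa : mf sa = ∑ s', P sa s' * vmax fun a' => Qstar (s', a') := rfl
              rw [hmfsa]
              linarith [hb]
            have hVtb : |vmax (fun a' => Q (a + j) k ((traj k (a + j + 1) ω).1, a') ω)
                - Vs ((traj k (a + j + 1) ω)).1| ≤ Δ + ((j : ℝ) * η * C + 2 * η * t) := by
              have hVseq : Vs ((traj k (a + j + 1) ω)).1
                  = vmax (fun a' => Qstar (((traj k (a + j + 1) ω)).1, a')) := rfl
              rw [hVseq]
              apply abs_vmax_sub_vmax_le
              intro a'
              have h1 : |Qstar ((traj k (a + j + 1) ω).1, a')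
                  - Q a k ((traj k (a + j + 1) ω).1, a') ω| ≤ Δ := by
                have h1' := abs_le_supNorm (fun sa : S × A => Qstar sa - Q a k sa ω)
                  ((traj k (a + j + 1) ω).1, a')
                rw [← hΔdef] at h1'
                exact h1'
              have h2 := ih hjJ ((traj k (a + j + 1) ω).1, a')
              have h3 := hMb ((traj k (a + j + 1) ω).1, a') j hjJ
              have hdec : Q (a + j) k ((traj k (a + j + 1) ω).1, a') ω
                    - Qstar ((traj k (a + j + 1) ω).1, a')
                  = (Q (a + j) k ((traj k (a + j + 1) ω).1, a') ω
                      - Q a k ((traj k (a + j + 1) ω).1, a') ω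
                      - M ((traj k (a + j + 1) ω).1, a') j)
                    + M ((traj k (a + j + 1) ω).1, a') j
                    - (Qstar ((traj k (a + j + 1) ω).1, a')
                      - Q a k ((traj k (a + j + 1) ω).1, a') ω) := by ring
              rw [hdec]
              refine le_trans (abs_sub _ _) ?_
              refine le_trans (add_le_add_left (abs_add_le _ _) _) ?_
              linarith [h1, h2, h3]
            have hAj := ih hjJ sa
            have heq : Q (a + (j + 1)) k sa ω - Q a k sa ω - M sa (j + 1)
                = (1 - η) * (Q (a + j) k sa ω - Q a k sa ω - M sa j)
                  + η * ((Qstar sa - Q a k sa ω)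
                      + γ * (vmax (fun a' => Q (a + j) k ((traj k (a + j + 1) ω).1, a') ω)
                          - Vs ((traj k (a + j + 1) ω)).1)) := by
              rw [hQ1, hM1, hrsa, ← hsa]
              ring
            rw [heq]
            have h1mη : (0:ℝ) ≤ 1 - η := by linarith
            have hZ3 : |Qstar sa - Q a k sa ω| ≤ Δ := by
              have := abs_le_supNorm (fun sa : S × A => Qstar sa - Q a k sa ω) sa
              rw [← hΔdef] at this
              exact this
            have hZ2 : |(Qstar sa - Q a k sa ω)
                + γ * (vmax (fun a' => Q (a + j) k ((traj k (a + j + 1) ω).1, a') ω)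
                    - Vs ((traj k (a + j + 1) ω)).1)|
                ≤ Δ + γ * (Δ + ((j : ℝ) * η * C + 2 * η * t)) := by
              refine le_trans (abs_add_le _ _) ?_
              rw [abs_mul, abs_of_nonneg hγ0]
              have := mul_le_mul_of_nonneg_left hVtb hγ0
              linarith [hZ3]
            have hjC : (0:ℝ) ≤ (j:ℝ) * η * C := by positivity
            have key : (1 - η) * ((j:ℝ) * η * C)
                + η * (Δ + γ * (Δ + ((j:ℝ) * η * C + 2 * η * t))) ≤ ((j:ℝ) + 1) * η * C := by
              have e1 : η * (Δ + γ * (Δ + ((j:ℝ) * η * C + 2 * η * t)))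
                  = η * C + η * γ * ((j:ℝ) * η * C) := by rw [hCdef]; ring
              rw [e1]
              have hhint : (0:ℝ) ≤ η * (1 - γ) * ((j:ℝ) * η * C) :=
                mul_nonneg (mul_nonneg hη0.le (by linarith)) hjC
              nlinarith [hhint]
            push_cast
            calc |(1 - η) * (Q (a + j) k sa ω - Q a k sa ω - M sa j)
                + η * ((Qstar sa - Q a k sa ω)
                    + γ * (vmax (fun a' => Q (a + j) k ((traj k (a + j + 1) ω).1, a') ω)
                        - Vs ((traj k (a + j + 1) ω)).1))|
                ≤ |(1 - η) * (Q (a + j) k sa ω - Q a k sa ω - M sa j)|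
                  + |η * ((Qstar sa - Q a k sa ω)
                    + γ * (vmax (fun a' => Q (a + j) k ((traj k (a + j + 1) ω).1, a') ω)
                        - Vs ((traj k (a + j + 1) ω)).1))| := abs_add_le _ _
              _ = (1 - η) * |Q (a + j) k sa ω - Q a k sa ω - M sa j|
                  + η * |(Qstar sa - Q a k sa ω)
                    + γ * (vmax (fun a' => Q (a + j) k ((traj k (a + j + 1) ω).1, a') ω)
                        - Vs ((traj k (a + j + 1) ω)).1)| := by
                  rw [abs_mul, abs_mul, abs_of_nonneg h1mη, abs_of_nonneg hη0.le]
              _ ≤ (1 - η) * ((j:ℝ) * η * C)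
                  + η * (Δ + γ * (Δ + ((j:ℝ) * η * C + 2 * η * t))) :=
                  add_le_add (mul_le_mul_of_nonneg_left hAj h1mη)
                    (mul_le_mul_of_nonneg_left hZ2 hη0.le)
              _ ≤ ((j:ℝ) + 1) * η * C := key
          · have hM1 : M sa (j + 1) = M sa j := by
              simp only [hMdef, driftM]
              rw [if_neg hsa]
            have hQ1 : Q (a + (j + 1)) k sa ω = Q (a + j) k sa ω := by
              rw [hidx, havg (a + j) k sa ω, if_neg hndiv, hupd (a + j) k sa ω, if_neg hsa]
            rw [hQ1, hM1]
            refine le_trans (ih hjJ sa) ?_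
            have hηC : (0:ℝ) ≤ η * C := mul_nonneg hη0.le hC0
            push_cast
            nlinarith [hηC, Nat.cast_nonneg (α := ℝ) j]
    -- conclusion for this (k, u)
    have hfin : ∀ sa : S × A, |Q u k sa ω - Q a k sa ω| ≤ (J:ℝ) * η * C + 2 * η * t := by
      intro sa
      have h1 := hA J le_rfl sa
      have h2 := hMb sa J le_rfl
      have hdec : Q u k sa ω - Q a k sa ω
          = (Q (a + J) k sa ω - Q a k sa ω - M sa J) + M sa J := by
        rw [huaJ]; ring
      rw [hdec]
      exact le_trans (abs_add_le _ _) (add_le_add h1 h2)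
    refine le_trans (supNorm_le hfin) ?_
    -- final arithmetic
    have hJr : (J:ℝ) ≤ (τ:ℝ) - 1 := by
      rw [← hmmr]; exact_mod_cast hJmm
    have hτ1 : (1:ℝ) ≤ (τ:ℝ) := by exact_mod_cast hτ
    have hJ0 : (0:ℝ) ≤ (J:ℝ) := Nat.cast_nonneg J
    have hsqrtsplit : Real.sqrt (2 * (mm:ℝ) * L)
        = Real.sqrt 2 * Real.sqrt ((τ:ℝ) - 1) * Real.sqrt L := by
      rw [Real.sqrt_mul (by positivity), Real.sqrt_mul (by norm_num), hmmr]
    have hs2 : Real.sqrt 2 ≤ 1.5 := by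
      nlinarith [Real.sq_sqrt (by norm_num : (0:ℝ) ≤ 2), Real.sqrt_nonneg 2]
    have hW0 : (0:ℝ) ≤ γ * η * Real.sqrt ((τ:ℝ) - 1) * Real.sqrt L / (1 - γ) := by positivity
    have hJη : (J:ℝ) * η ≤ 1 / 2 := by
      nlinarith [mul_le_mul_of_nonneg_right hJr hη0.le, hητ, hη0]
    have hγηJ : γ * ((J:ℝ) * η) ≤ 1 / 2 := by
      nlinarith [hJη, hγ0, hγ1, mul_nonneg hJ0 hη0.le]
    have hkey1 : (J:ℝ) * η * C + 2 * η * t ≤ 2 * η * (τ:ℝ) * Δ + 3 * η * t := by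
      rw [hCdef]
      have e1 : (J:ℝ) * (1 + γ) ≤ 2 * (τ:ℝ) := by nlinarith [hJr, hγ1, hτ1, hγ0, hJ0]
      have p1 : (J:ℝ) * η * ((1 + γ) * Δ) ≤ 2 * η * (τ:ℝ) * Δ := by
        nlinarith [mul_le_mul_of_nonneg_right e1 (mul_nonneg hη0.le hΔ0)]
      have p2 : (J:ℝ) * η * (2 * γ * η * t) ≤ η * t := by
        nlinarith [mul_le_mul_of_nonneg_right hγηJ (mul_nonneg hη0.le ht0),
          mul_nonneg hη0.le ht0]
      nlinarith [p1, p2]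
    have hkey2 : 3 * η * t ≤ 8 * γ * η * Real.sqrt ((τ:ℝ) - 1) / (1 - γ) * Real.sqrt L := by
      rw [htdef, hcdef, hsqrtsplit]
      have heq2 : 8 * γ * η * Real.sqrt ((τ:ℝ) - 1) / (1 - γ) * Real.sqrt L
          - 3 * η * (γ / (1 - γ) * (Real.sqrt 2 * Real.sqrt ((τ:ℝ) - 1) * Real.sqrt L))
          = (8 - 3 * Real.sqrt 2)
            * (γ * η * Real.sqrt ((τ:ℝ) - 1) * Real.sqrt L / (1 - γ)) := by
        field_simp
      have hprod : (0:ℝ) ≤ (8 - 3 * Real.sqrt 2)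
          * (γ * η * Real.sqrt ((τ:ℝ) - 1) * Real.sqrt L / (1 - γ)) :=
        mul_nonneg (by linarith only [hs2]) hW0
      linarith only [heq2, hprod]
    refine le_trans hkey1 ?_
    linarith only [hkey2]
  -- conclude
  have hfinal : ENNReal.ofReal (1 - δ) ≤ Pr BigUᶜ := by
    have h1 : (1 : ENNReal) ≤ Pr BigUᶜ + Pr BigU := by
      rw [← measure_univ (μ := Pr)]
      have hcup : (Set.univ : Set Ω) ⊆ BigUᶜ ∪ BigU := by
        intro ω' _
        by_cases h : ω' ∈ BigU
        · exact Or.inr h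
        · exact Or.inl h
      exact le_trans (measure_mono hcup) (measure_union_le _ _)
    have h2 : (1 : ENNReal) ≤ Pr BigUᶜ + ENNReal.ofReal δ :=
      le_trans h1 (add_le_add le_rfl hPrBigU)
    have h3 : ENNReal.ofReal (1 - δ) + ENNReal.ofReal δ = 1 := by
      rw [← ENNReal.ofReal_add (by linarith) hδ0.le]
      norm_num
    rw [← h3] at h2
    exact (ENNReal.add_le_add_iff_right ENNReal.ofReal_ne_top).1 h2
  exact le_trans hfinal (measure_mono hsub)
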